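/- Let a, b, c, d ∈ ℂ and define H_VI(x,u,v) = (1/(x(x−1)))·[u(u−1)(u−x)v² − (a(u−1)(u−x) + bu(u−x) + (c−1)u(u−1))v + (1/4)((a+b+c−1)² − d²)(u−x)]. Then there exist complex numbers α, β, γ, δ (depending only on a, b, c, d) such that for every open set Ω ⊆ ℂ and all differentiable functions u, v : Ω → ℂ with x ≠ 0, x ≠ 1, u(x) ≠ 0, u(x) ≠ 1 and u(x) ≠ x for all x ∈ Ω, if u'(x) = (∂H_VI/∂v)(x,u(x),v(x)) and v'(x) = −(∂H_VI/∂u)(x,u(x),v(x)) for all x ∈ Ω, then u''(x) = (1/2)(1/u + 1/(u−1) + 1/(u−x))u'² − (1/x + 1/(x−1) + 1/(u−x))u' + [u(u−1)(u−x)/(x²(x−1)²)]·(α + βx/u² + γ(x−1)/(u−1)² + δx(x−1)/(u−x)²) for all x ∈ Ω (with u, u' evaluated at x). -/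

import Mathlib

/-- The Okamoto Hamiltonian of the sixth Painlevé equation:
`H_VI(x,u,v) = (1/(x(x−1)))·[u(u−1)(u−x)v² − (a(u−1)(u−x) + bu(u−x) + (c−1)u(u−1))v
  + (1/4)((a+b+c−1)² − d²)(u−x)]`. -/
noncomputable def HVI (a b c d x u v : ℂ) : ℂ :=
  (1 / (x * (x - 1))) * (u * (u - 1) * (u - x) * v ^ 2
    - (a * (u - 1) * (u - x) + b * u * (u - x) + (c - 1) * u * (u - 1)) * v
    + (1 / 4) * ((a + b + c - 1) ^ 2 - d ^ 2) * (u - x))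

/-- `∂H_VI/∂v` as a rational expression. -/
noncomputable def Fp (a b c x p q : ℂ) : ℂ :=
  (x*(x-1))⁻¹ * (2*p*(p-1)*(p-x)*q
    - (a*(p-1)*(p-x) + b*p*(p-x) + (c-1)*p*(p-1)))

/-- `∂H_VI/∂u` as a rational expression. -/
noncomputable def Gp (a b c d x p q : ℂ) : ℂ :=
  (x*(x-1))⁻¹ * ((3*p^2 - 2*(1+x)*p + x)*q^2
    - (a*(2*p-1-x) + b*(2*p-x) + (c-1)*(2*p-1))*q
    + (1/4)*((a+b+c-1)^2 - d^2))

lemma quad_deriv (A B C z : ℂ) : deriv (fun w => A*w^2 + B*w + C) z = 2*A*z + B := by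
  have h : HasDerivAt (fun w => A*w^2 + B*w + C) (2*A*z + B) z := by
    have h2 : HasDerivAt (fun w : ℂ => w^2) (2*z) z := by simpa using hasDerivAt_pow 2 z
    have h1 : HasDerivAt (fun w : ℂ => w) 1 z := hasDerivAt_id z
    have := ((h2.const_mul A).add (h1.const_mul B)).add_const C
    exact this.congr_deriv (by ring)
  exact h.deriv

lemma cubic_deriv (A B C D z : ℂ) :
    deriv (fun w => A*w^3 + B*w^2 + C*w + D) z = 3*A*z^2 + 2*B*z + C := by
  have h : HasDerivAt (fun w => A*w^3 + B*w^2 + C*w + D) (3*A*z^2 + 2*B*z + C) z := by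
    have h3 : HasDerivAt (fun w : ℂ => w^3) (3*z^2) z := by simpa using hasDerivAt_pow 3 z
    have h2 : HasDerivAt (fun w : ℂ => w^2) (2*z) z := by simpa using hasDerivAt_pow 2 z
    have h1 : HasDerivAt (fun w : ℂ => w) 1 z := hasDerivAt_id z
    have := (((h3.const_mul A).add (h2.const_mul B)).add (h1.const_mul C)).add_const D
    exact this.congr_deriv (by ring)
  exact h.deriv

lemma hv_deriv (a b c d x u0 v0 : ℂ) :
    deriv (fun w => HVI a b c d x u0 w) v0 = Fp a b c x u0 v0 := by
  have hfun : (fun w => HVI a b c d x u0 w)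
      = fun w => (1/(x*(x-1)) * (u0*(u0-1)*(u0-x))) * w^2
        + (-(1/(x*(x-1)) * (a*(u0-1)*(u0-x)+b*u0*(u0-x)+(c-1)*u0*(u0-1)))) * w
        + (1/(x*(x-1)) * ((1/4)*((a+b+c-1)^2-d^2)*(u0-x))) := by
    funext w ; simp only [HVI] ; ring
  rw [hfun, quad_deriv, Fp] ; ring

lemma hu_deriv (a b c d x u0 v0 : ℂ) :
    deriv (fun w => HVI a b c d x w v0) u0 = Gp a b c d x u0 v0 := by
  have hfun : (fun w => HVI a b c d x w v0)
      = fun w => (1/(x*(x-1)) * v0^2) * w^3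
        + (1/(x*(x-1)) * (-(1+x)*v0^2 - (a+b+c-1)*v0)) * w^2
        + (1/(x*(x-1)) * (x*v0^2 + (a*(1+x)+b*x+(c-1))*v0 + (1/4)*((a+b+c-1)^2-d^2))) * w
        + (1/(x*(x-1)) * (-(a*x)*v0 - (1/4)*((a+b+c-1)^2-d^2)*x)) := by
    funext w ; simp only [HVI] ; ring
  rw [hfun, cubic_deriv, Gp] ; ring

set_option maxHeartbeats 1000000 in
lemma b3 (a b c d x U N : ℂ) (h0 : x ≠ 0) (h1 : x - 1 ≠ 0)
    (hU0 : U ≠ 0) (hU1 : U - 1 ≠ 0) (hUx : U - x ≠ 0) :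
  ((1/2)*((U-1)*(U-x) + U*(U-x) + U*(U-1))*N^2
        - ((x-1)*(U-x) + x*(U-x) + x*(x-1))*N*(U*(U-1))
        + (d^2/2*(U*(U-1)*(U-x))^2 + (-(a^2)/2)*x*((U-1)*(U-x))^2
            + b^2/2*(x-1)*(U*(U-x))^2 + (1-c^2)/2*x*(x-1)*(U*(U-1))^2))
      / ((x*(x-1))^2 * (U*(U-1)*(U-x)))
  = 1 / 2 * (1 / U + 1 / (U - 1) + 1 / (U - x)) * ((x * (x - 1))⁻¹ * N) ^ 2
    - (1 / x + 1 / (x - 1) + 1 / (U - x)) * ((x * (x - 1))⁻¹ * N)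
    + U * (U - 1) * (U - x) / (x ^ 2 * (x - 1) ^ 2) *
        (d ^ 2 / 2 + -(a ^ 2) / 2 * x / U ^ 2 + b ^ 2 / 2 * (x - 1) / (U - 1) ^ 2 +
          (1 - c ^ 2) / 2 * x * (x - 1) / (U - x) ^ 2) := by
  have hxx : x * (x - 1) ≠ 0 := mul_ne_zero h0 h1
  have hUUU : U * (U - 1) * (U - x) ≠ 0 := mul_ne_zero (mul_ne_zero hU0 hU1) hUx
  have hD : (x*(x-1))^2 * (U*(U-1)*(U-x)) ≠ 0 := mul_ne_zero (pow_ne_zero 2 hxx) hUUU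
  have e1 : 1 / 2 * (1 / U + 1 / (U - 1) + 1 / (U - x)) * ((x * (x - 1))⁻¹ * N) ^ 2
      = ((1/2)*((U-1)*(U-x) + U*(U-x) + U*(U-1))*N^2) / ((x*(x-1))^2 * (U*(U-1)*(U-x))) := by
    rw [inv_mul_eq_div, div_add_div _ _ hU0 hU1, div_add_div _ _ (mul_ne_zero hU0 hU1) hUx,
        div_pow, div_mul_div_comm, div_mul_div_comm,
        div_eq_div_iff (mul_ne_zero (mul_ne_zero two_ne_zero hUUU) (pow_ne_zero 2 hxx)) hD]
    ring
  have e2 : (1 / x + 1 / (x - 1) + 1 / (U - x)) * ((x * (x - 1))⁻¹ * N)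
      = (((x-1)*(U-x) + x*(U-x) + x*(x-1))*N*(U*(U-1))) / ((x*(x-1))^2 * (U*(U-1)*(U-x))) := by
    rw [inv_mul_eq_div, div_add_div _ _ h0 h1, div_add_div _ _ hxx hUx, div_mul_div_comm,
        div_eq_div_iff (mul_ne_zero (mul_ne_zero hxx hUx) hxx) hD]
    ring
  have e3 : U * (U - 1) * (U - x) / (x ^ 2 * (x - 1) ^ 2) *
        (d ^ 2 / 2 + -(a ^ 2) / 2 * x / U ^ 2 + b ^ 2 / 2 * (x - 1) / (U - 1) ^ 2 +
          (1 - c ^ 2) / 2 * x * (x - 1) / (U - x) ^ 2)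
      = (d^2/2*(U*(U-1)*(U-x))^2 + (-(a^2)/2)*x*((U-1)*(U-x))^2
            + b^2/2*(x-1)*(U*(U-x))^2 + (1-c^2)/2*x*(x-1)*(U*(U-1))^2)
          / ((x*(x-1))^2 * (U*(U-1)*(U-x))) := by
    rw [div_add_div _ _ two_ne_zero (pow_ne_zero 2 hU0),
        div_add_div _ _ (mul_ne_zero two_ne_zero (pow_ne_zero 2 hU0)) (pow_ne_zero 2 hU1),
        div_add_div _ _ (mul_ne_zero (mul_ne_zero two_ne_zero (pow_ne_zero 2 hU0)) (pow_ne_zero 2 hU1)) (pow_ne_zero 2 hUx),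
        div_mul_div_comm,
        div_eq_div_iff (mul_ne_zero (mul_ne_zero (pow_ne_zero 2 h0) (pow_ne_zero 2 h1)) (mul_ne_zero (mul_ne_zero (mul_ne_zero two_ne_zero (pow_ne_zero 2 hU0)) (pow_ne_zero 2 hU1)) (pow_ne_zero 2 hUx))) hD]
    ring
  rw [e1, e2, e3, div_sub_div_same, ← add_div]

set_option maxHeartbeats 4000000 in
/-- Painlevé VI admits a rational Hamiltonian form: there exist parameters `α β γ δ`
(depending only on `a b c d`) such that any solution `(u,v)` of the Hamiltonian system
`u' = ∂H_VI/∂v`, `v' = −∂H_VI/∂u` on an open set `Ω ⊆ ℂ` (with `x ≠ 0`, `x ≠ 1`,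
`u ≠ 0`, `u ≠ 1`, `u ≠ x` on `Ω`) has `u` a solution of the sixth Painlevé equation
`P_VI(α,β,γ,δ)`. -/
theorem stmt_10 (a b c d : ℂ) :
    ∃ α β γ δ : ℂ, ∀ (Ω : Set ℂ), IsOpen Ω → ∀ u v : ℂ → ℂ,
      (∀ x ∈ Ω, x ≠ 0) → (∀ x ∈ Ω, x ≠ 1) →
      (∀ x ∈ Ω, u x ≠ 0) → (∀ x ∈ Ω, u x ≠ 1) → (∀ x ∈ Ω, u x ≠ x) →
      (∀ x ∈ Ω, HasDerivAt u (deriv (fun w => HVI a b c d x (u x) w) (v x)) x) →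
      (∀ x ∈ Ω, HasDerivAt v (-(deriv (fun w => HVI a b c d x w (v x)) (u x))) x) →
      ∀ x ∈ Ω, deriv (deriv u) x =
        (1 / 2) * (1 / u x + 1 / (u x - 1) + 1 / (u x - x)) * (deriv u x) ^ 2
          - (1 / x + 1 / (x - 1) + 1 / (u x - x)) * deriv u x
          + (u x * (u x - 1) * (u x - x) / (x ^ 2 * (x - 1) ^ 2)) *
              (α + β * x / (u x) ^ 2 + γ * (x - 1) / (u x - 1) ^ 2
                + δ * x * (x - 1) / (u x - x) ^ 2) := by
  refine ⟨d^2/2, -(a^2)/2, b^2/2, (1-c^2)/2, ?_⟩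
  intro Ω hΩ u v hx0 hx1 hu0 hu1 hux hu' hv' x hx
  have hU : ∀ y ∈ Ω, HasDerivAt u (Fp a b c y (u y) (v y)) y := by
    intro y hy; have := hu' y hy; rwa [hv_deriv] at this
  have hV : ∀ y ∈ Ω, HasDerivAt v (-(Gp a b c d y (u y) (v y))) y := by
    intro y hy; have := hv' y hy; rwa [hu_deriv] at this
  have hderiv_u : ∀ y ∈ Ω, deriv u y = Fp a b c y (u y) (v y) :=
    fun y hy => (hU y hy).deriv
  have hev : deriv u =ᶠ[nhds x] (fun y => Fp a b c y (u y) (v y)) :=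
    Filter.eventually_of_mem (hΩ.mem_nhds hx) hderiv_u
  -- nonvanishing facts at x
  have h0 : x ≠ 0 := hx0 x hx
  have h1 : x - 1 ≠ 0 := sub_ne_zero.mpr (hx1 x hx)
  have hxx : x * (x - 1) ≠ 0 := mul_ne_zero h0 h1
  have hU0 : u x ≠ 0 := hu0 x hx
  have hU1 : u x - 1 ≠ 0 := sub_ne_zero.mpr (hu1 x hx)
  have hUx : u x - x ≠ 0 := sub_ne_zero.mpr (hux x hx)
  -- build the derivative of y ↦ Fp a b c y (u y) (v y) at x
  have hu := hU x hx
  have hv := hV x hx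
  have hid : HasDerivAt (fun y : ℂ => y) 1 x := hasDerivAt_id x
  have hq : HasDerivAt (fun y : ℂ => y * (y-1)) (1*(x-1) + x*1) x :=
    hid.mul (hid.sub_const 1)
  have hinv : HasDerivAt (fun y : ℂ => (y*(y-1))⁻¹)
      (-(1*(x-1) + x*1) / (x*(x-1))^2) x := hq.inv hxx
  have hu1' : HasDerivAt (fun y => u y - 1) (Fp a b c x (u x) (v x)) x := hu.sub_const 1
  have huy : HasDerivAt (fun y => u y - y) (Fp a b c x (u x) (v x) - 1) x := hu.sub hid
  have t1 := (((hu.const_mul (2:ℂ)).mul hu1').mul huy).mul hv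
  have t2 := (hu1'.const_mul a).mul huy
  have t3 := (hu.const_mul b).mul huy
  have t4 := (hu.const_mul (c-1)).mul hu1'
  have hN := t1.sub ((t2.add t3).add t4)
  have hF := hinv.mul hN
  have key : deriv (deriv u) x =
      deriv (fun y => Fp a b c y (u y) (v y)) x := hev.deriv_eq
  have key2 : deriv (fun y => Fp a b c y (u y) (v y)) x = _ := hF.deriv
  rw [key, key2, hderiv_u x hx]
  simp only [Fp, Gp]
  set N := 2 * u x * (u x - 1) * (u x - x) * v x -
      (a * (u x - 1) * (u x - x) + b * u x * (u x - x) + (c - 1) * u x * (u x - 1)) with hNdef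
  set GN := (3 * u x ^ 2 - 2 * (1 + x) * u x + x) * v x ^ 2 -
      (a * (2 * u x - 1 - x) + b * (2 * u x - x) + (c - 1) * (2 * u x - 1)) * v x +
      1 / 4 * ((a + b + c - 1) ^ 2 - d ^ 2) with hGNdef
  have hUUU : u x * (u x - 1) * (u x - x) ≠ 0 := mul_ne_zero (mul_ne_zero hU0 hU1) hUx
  have hC : (-(2*x-1)*N + (((2*N*(u x-1) + 2*(u x)*N)*(u x-x)
        + 2*(u x)*(u x-1)*(N - x*(x-1)))*(v x)
        + 2*(u x)*(u x-1)*(u x-x)*(-GN)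
        - (a*N*(u x-x) + a*(u x-1)*(N - x*(x-1)) + b*N*(u x-x) + b*(u x)*(N - x*(x-1))
            + (c-1)*N*(u x-1) + (c-1)*(u x)*N))) * (u x*(u x-1)*(u x-x))
      = ((1/2)*((u x-1)*(u x-x) + u x*(u x-x) + u x*(u x-1))*N^2
        - ((x-1)*(u x-x) + x*(u x-x) + x*(x-1))*N*(u x*(u x-1))
        + (d^2/2*(u x*(u x-1)*(u x-x))^2 + (-(a^2)/2)*x*((u x-1)*(u x-x))^2
            + b^2/2*(x-1)*(u x*(u x-x))^2 + (1-c^2)/2*x*(x-1)*(u x*(u x-1))^2)) := by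
    rw [hNdef, hGNdef]; ring
  trans ((-(2*x-1)*N + (((2*N*(u x-1) + 2*(u x)*N)*(u x-x)
        + 2*(u x)*(u x-1)*(N - x*(x-1)))*(v x)
        + 2*(u x)*(u x-1)*(u x-x)*(-GN)
        - (a*N*(u x-x) + a*(u x-1)*(N - x*(x-1)) + b*N*(u x-x) + b*(u x)*(N - x*(x-1))
            + (c-1)*N*(u x-1) + (c-1)*(u x)*N))) / (x*(x-1))^2)
  · simp only [Pi.mul_apply, Pi.sub_apply, Pi.add_apply]
    rw [hNdef, hGNdef]
    field_simp
    ring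
  trans (((1/2)*((u x-1)*(u x-x) + u x*(u x-x) + u x*(u x-1))*N^2
        - ((x-1)*(u x-x) + x*(u x-x) + x*(x-1))*N*(u x*(u x-1))
        + (d^2/2*(u x*(u x-1)*(u x-x))^2 + (-(a^2)/2)*x*((u x-1)*(u x-x))^2
            + b^2/2*(x-1)*(u x*(u x-x))^2 + (1-c^2)/2*x*(x-1)*(u x*(u x-1))^2))
      / ((x*(x-1))^2 * (u x*(u x-1)*(u x-x))))
  · rw [← hC]
    exact (mul_div_mul_right _ _ hUUU).symm
  · exact b3 a b c d x (u x) N h0 h1 hU0 hU1 hUx
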